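/- Let G be a finite group, N a subgroup of G, x ∈ G, and d a positive integer. Then o(x^d, N) = o(x, N) / gcd(d, o(x, N)); in particular, o(x^{o(x,N)}, N) = 1. -/

import Mathlib

/-- `nOrd S x` is the smallest positive integer `k` such that `x ^ k ∈ S`. -/
noncomputable def nOrd {G : Type*} [Group G] (S : Set G) (x : G) : ℕ :=
  sInf {k : ℕ | 0 < k ∧ x ^ k ∈ S}

/-- `gOrd S x = gcd { nOrd S (g⁻¹ * x * g) : g ∈ G }`, the generalized order of `x`
with respect to `S`. -/
noncomputable def gOrd {G : Type*} [Group G] [Fintype G] (S : Set G) (x : G) : ℕ :=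
  Finset.univ.gcd fun g : G => nOrd S (g⁻¹ * x * g)

section aux

variable {G : Type*} [Group G] [Fintype G] (N : Subgroup G) (x : G)

lemma nOrd_set_nonempty : {k : ℕ | 0 < k ∧ x ^ k ∈ (N : Set G)}.Nonempty :=
  ⟨Fintype.card G, Fintype.card_pos, by
    show x ^ Fintype.card G ∈ N
    rw [pow_card_eq_one]; exact N.one_mem⟩

lemma nOrd_pos : 0 < nOrd (N : Set G) x :=
  (Nat.sInf_mem (nOrd_set_nonempty N x)).1

lemma pow_nOrd_mem : x ^ nOrd (N : Set G) x ∈ N :=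
  (Nat.sInf_mem (nOrd_set_nonempty N x)).2

lemma pow_mem_iff_nOrd_dvd (k : ℕ) : x ^ k ∈ N ↔ nOrd (N : Set G) x ∣ k := by
  set n := nOrd (N : Set G) x with hn
  have hnpos : 0 < n := nOrd_pos N x
  have hxn : x ^ n ∈ N := pow_nOrd_mem N x
  constructor
  · intro hk
    have hr : x ^ (k % n) ∈ N := by
      have hdecomp : x ^ (k % n) = ((x ^ n) ^ (k / n))⁻¹ * x ^ k := by
        rw [← pow_mul]
        rw [show x ^ k = x ^ (n * (k / n) + k % n) by rw [Nat.div_add_mod]]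
        rw [pow_add]
        group
      rw [hdecomp]
      exact N.mul_mem (N.inv_mem (N.pow_mem hxn _)) hk
    rw [Nat.dvd_iff_mod_eq_zero]
    by_contra h
    have hle : n ≤ k % n := Nat.sInf_le ⟨Nat.pos_of_ne_zero h, hr⟩
    have := Nat.mod_lt k hnpos
    omega
  · rintro ⟨c, rfl⟩
    rw [pow_mul]
    exact N.pow_mem hxn c

lemma nOrd_pow (d : ℕ) (hd : 0 < d) :
    nOrd (N : Set G) (x ^ d) = nOrd (N : Set G) x / Nat.gcd (nOrd (N : Set G) x) d := by
  set n := nOrd (N : Set G) x with hn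
  have hnpos : 0 < n := nOrd_pos N x
  set g := Nat.gcd n d with hg
  have hgpos : 0 < g := Nat.gcd_pos_of_pos_left d hnpos
  have hgn : g ∣ n := Nat.gcd_dvd_left n d
  have hgd : g ∣ d := Nat.gcd_dvd_right n d
  have hepos : 0 < n / g := Nat.div_pos (Nat.le_of_dvd hnpos hgn) hgpos
  have key : ∀ k : ℕ, (x ^ d) ^ k ∈ N ↔ n / g ∣ k := by
    intro k
    rw [← pow_mul, pow_mem_iff_nOrd_dvd N x, ← hn]
    constructor
    · intro h
      have h' : n / g * g ∣ d / g * k * g := by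
        rw [show d / g * k * g = d / g * g * k by ring, Nat.div_mul_cancel hgn,
          Nat.div_mul_cancel hgd]
        exact h
      rw [Nat.mul_dvd_mul_iff_right hgpos] at h'
      exact (Nat.Coprime.dvd_of_dvd_mul_left (Nat.coprime_div_gcd_div_gcd hgpos) h')
    · intro h
      calc n = n / g * g := (Nat.div_mul_cancel hgn).symm
        _ ∣ k * g := mul_dvd_mul h dvd_rfl
        _ ∣ d * k := by rw [mul_comm]; exact mul_dvd_mul hgd dvd_rfl
  have hset : {k : ℕ | 0 < k ∧ (x ^ d) ^ k ∈ (N : Set G)} = {k : ℕ | 0 < k ∧ n / g ∣ k} := by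
    ext k
    simp only [Set.mem_setOf_eq, SetLike.mem_coe, key k]
  rw [nOrd, hset]
  have hmem : n / g ∈ {k : ℕ | 0 < k ∧ n / g ∣ k} := ⟨hepos, dvd_rfl⟩
  have h1 : sInf {k : ℕ | 0 < k ∧ n / g ∣ k} ≤ n / g := Nat.sInf_le hmem
  have h2 := Nat.sInf_mem (⟨n / g, hmem⟩ : {k : ℕ | 0 < k ∧ n / g ∣ k}.Nonempty)
  exact le_antisymm h1 (Nat.le_of_dvd h2.1 h2.2)

/-- distributivity of lcm over gcd in ℕ. -/
lemma lcm_gcd_distrib (a b d : ℕ) (ha : 0 < a) (hb : 0 < b) (hd : 0 < d) :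
    Nat.lcm (Nat.gcd a b) d = Nat.gcd (Nat.lcm a d) (Nat.lcm b d) := by
  have hgab : Nat.gcd a b ≠ 0 := (Nat.gcd_pos_of_pos_left b ha).ne'
  have hlad : Nat.lcm a d ≠ 0 := (Nat.lcm_pos ha hd).ne'
  have hlbd : Nat.lcm b d ≠ 0 := (Nat.lcm_pos hb hd).ne'
  apply Nat.factorization_inj
    (by simpa using (Nat.lcm_pos (Nat.gcd_pos_of_pos_left b ha) hd).ne')
    (by simpa using (Nat.gcd_pos_of_pos_left (Nat.lcm b d) (Nat.lcm_pos ha hd)).ne')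
  rw [Nat.factorization_lcm hgab hd.ne', Nat.factorization_gcd ha.ne' hb.ne',
    Nat.factorization_gcd hlad hlbd, Nat.factorization_lcm ha.ne' hd.ne',
    Nat.factorization_lcm hb.ne' hd.ne']
  ext p
  simp only [Finsupp.sup_apply, Finsupp.inf_apply]
  exact sup_inf_right _ _ _

lemma div_gcd_mul (n d : ℕ) (hg : 0 < Nat.gcd n d) :
    n / Nat.gcd n d * d = Nat.lcm n d := by
  set g := Nat.gcd n d with hgdef
  obtain ⟨c, hc⟩ : g ∣ n := hgdef ▸ Nat.gcd_dvd_left n d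
  rw [Nat.lcm, ← hgdef, hc, Nat.mul_div_cancel_left _ hg, mul_assoc,
    Nat.mul_div_cancel_left _ hg]

lemma finset_lcm_gcd {ι : Type*} {s : Finset ι} (hs : s.Nonempty) (f : ι → ℕ)
    (hf : ∀ i ∈ s, 0 < f i) (d : ℕ) (hd : 0 < d) :
    Nat.lcm (s.gcd f) d = s.gcd fun i => Nat.lcm (f i) d := by
  induction hs using Finset.Nonempty.cons_induction with
  | singleton i =>
    simp [Finset.gcd_singleton, lcm_eq_nat_lcm]
  | cons i s hi hne ih =>
    have hfi : 0 < f i := hf i (Finset.mem_cons_self i s)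
    have hfs : ∀ j ∈ s, 0 < f j := fun j hj => hf j (Finset.mem_cons.2 (Or.inr hj))
    have hgs : 0 < s.gcd f := by
      rcases hne with ⟨j, hj⟩
      have := Finset.gcd_eq_zero_iff (s := s) (f := f)
      rcases Nat.eq_zero_or_pos (s.gcd f) with h0 | h
      · exact absurd (this.1 h0 j hj) (hfs j hj).ne'
      · exact h
    classical
    rw [Finset.cons_eq_insert, Finset.gcd_insert, Finset.gcd_insert,
      gcd_eq_nat_gcd, gcd_eq_nat_gcd, lcm_gcd_distrib _ _ _ hfi hgs hd, ih hfs]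

lemma gOrd_pos : 0 < gOrd (N : Set G) x := by
  rcases Nat.eq_zero_or_pos (gOrd (N : Set G) x) with h0 | h
  · have := (Finset.gcd_eq_zero_iff.1 h0) 1 (Finset.mem_univ 1)
    exact absurd this (nOrd_pos N _).ne'
  · exact h

lemma gOrd_pow (d : ℕ) (hd : 0 < d) :
    gOrd (N : Set G) (x ^ d) = gOrd (N : Set G) x / Nat.gcd d (gOrd (N : Set G) x) := by
  set m := gOrd (N : Set G) x with hm
  have hmpos : 0 < m := gOrd_pos N x
  have hpos : ∀ g : G, 0 < nOrd (N : Set G) (g⁻¹ * x * g) := fun g => nOrd_pos N _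
  have step1 : ∀ g : G, nOrd (N : Set G) (g⁻¹ * x ^ d * g)
      = nOrd (N : Set G) (g⁻¹ * x * g) / Nat.gcd (nOrd (N : Set G) (g⁻¹ * x * g)) d := by
    intro g
    have hc : g⁻¹ * x ^ d * g = (g⁻¹ * x * g) ^ d := by
      have := conj_pow (i := d) (a := g⁻¹) (b := x)
      simpa using this.symm
    rw [hc, nOrd_pow N _ d hd]
  have hgcdm : 0 < Nat.gcd m d := Nat.gcd_pos_of_pos_left d hmpos
  have key : gOrd (N : Set G) (x ^ d) * d = m / Nat.gcd m d * d := by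
    calc gOrd (N : Set G) (x ^ d)  * d
        = (Finset.univ.gcd fun g : G =>
            nOrd (N : Set G) (g⁻¹ * x * g) / Nat.gcd (nOrd (N : Set G) (g⁻¹ * x * g)) d) * d := by
          rw [gOrd]
          congr 1
          exact Finset.gcd_congr rfl fun g _ => step1 g
      _ = Finset.univ.gcd fun g : G =>
            nOrd (N : Set G) (g⁻¹ * x * g) / Nat.gcd (nOrd (N : Set G) (g⁻¹ * x * g)) d * d := by
          rw [Finset.gcd_mul_right]
          simp
      _ = Finset.univ.gcd fun g : G => Nat.lcm (nOrd (N : Set G) (g⁻¹ * x * g)) d := by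
          exact Finset.gcd_congr rfl fun g _ =>
            div_gcd_mul _ _ (Nat.gcd_pos_of_pos_left d (hpos g))
      _ = Nat.lcm m d := by
          rw [hm, gOrd, ← finset_lcm_gcd Finset.univ_nonempty _ (fun g _ => hpos g) d hd]
      _ = m / Nat.gcd m d * d := (div_gcd_mul m d hgcdm).symm
  have := Nat.eq_of_mul_eq_mul_right hd key
  rw [this, Nat.gcd_comm]

end aux

theorem stmt7 {G : Type*} [Group G] [Fintype G] (N : Subgroup G) (x : G)
    (d : ℕ) (hd : 0 < d) :
    gOrd (N : Set G) (x ^ d) = gOrd (N : Set G) x / Nat.gcd d (gOrd (N : Set G) x) ∧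
      gOrd (N : Set G) (x ^ gOrd (N : Set G) x) = 1 := by
  refine ⟨gOrd_pow N x d hd, ?_⟩
  rw [gOrd_pow N x _ (gOrd_pos N x), Nat.gcd_self, Nat.div_self (gOrd_pos N x)]
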